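/- Let T ≥ 2 be an integer and let Y_t = μ + e_t, t = 1,…,T, where μ is a real constant and e_1,…,e_T are independent square-integrable real random variables with mean 0 and common variance σ². Let u ∈ (0,1) satisfy 1 ≤ ⌊Tu⌋ ≤ T−1, and let Ž(s,u) be the CUSUM process of the centered data Y̌_t(u) = Y_t − δ̂(u)·1(t > ⌊Tu⌋), where δ̂(u) = (T−⌊Tu⌋)^{−1} Σ_{t=⌊Tu⌋+1}^T Y_t − ⌊Tu⌋^{−1} Σ_{t=1}^{⌊Tu⌋} Y_t. Then for every s ∈ [0,1], E[ Ž(s,u)² ] = σ² · ( m_T(s) − g_T(s,u)² / m_T(u) ). -/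

import Mathlib

open MeasureTheory ProbabilityTheory

lemma sum_Icc_split' (f : ℕ → ℝ) {a b : ℕ} (h : a ≤ b) :
    ∑ t ∈ Finset.Icc 1 b, f t
      = ∑ t ∈ Finset.Icc 1 a, f t + ∑ t ∈ Finset.Icc (a + 1) b, f t := by
  rw [show Finset.Icc 1 a = Finset.Ioc 0 a from Finset.Icc_add_one_left_eq_Ioc 0 a,
    show Finset.Icc (a + 1) b = Finset.Ioc a b from Finset.Icc_add_one_left_eq_Ioc a b,
    show Finset.Icc 1 b = Finset.Ioc 0 b from Finset.Icc_add_one_left_eq_Ioc 0 b,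
    Finset.sum_Ioc_consecutive _ (Nat.zero_le a) h]

lemma sum_Icc_const' (r : ℝ) {a b : ℕ} (h : a ≤ b) :
    ∑ _t ∈ Finset.Icc (a + 1) b, r = ((b : ℝ) - (a : ℝ)) * r := by
  rw [Finset.sum_const, Nat.card_Icc, Nat.succ_sub_succ, nsmul_eq_mul, Nat.cast_sub h]

lemma sq_int {Ω : Type*} [MeasurableSpace Ω] (P : Measure Ω) [IsProbabilityMeasure P]
    (T : ℕ) (σ2 : ℝ) (e : ℕ → Ω → ℝ)
    (hmeas : ∀ k, Measurable (e k))
    (hindep : iIndepFun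
      (fun k : (Finset.Icc 1 T) => e (k : ℕ)) P)
    (hL2 : ∀ k ∈ Finset.Icc 1 T, MemLp (e k) 2 P)
    (hmean : ∀ k ∈ Finset.Icc 1 T, ∫ ω, e k ω ∂P = 0)
    (hvar : ∀ k ∈ Finset.Icc 1 T, ∫ ω, (e k ω) ^ 2 ∂P = σ2)
    (c : ℕ → ℝ) :
    ∫ ω, (∑ t ∈ Finset.Icc 1 T, c t * e t ω) ^ 2 ∂P
      = σ2 * ∑ t ∈ Finset.Icc 1 T, (c t) ^ 2 := by
  have hintmul : ∀ i ∈ Finset.Icc 1 T, ∀ j ∈ Finset.Icc 1 T,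
      Integrable (fun ω => e i ω * e j ω) P := by
    intro i hi j hj
    have h := (hL2 j hj).smul (φ := e i) (hL2 i hi)
      (p := 2) (q := 2) (r := 1) (hpqr := ⟨by rw [inv_one, ENNReal.inv_two_add_inv_two]⟩)
    rw [memLp_one_iff_integrable] at h
    exact h
  have hcov : ∀ i ∈ Finset.Icc 1 T, ∀ j ∈ Finset.Icc 1 T,
      ∫ ω, e i ω * e j ω ∂P = if i = j then σ2 else 0 := by
    intro i hi j hj
    by_cases h : i = j
    · subst h; rw [if_pos rfl]; simpa [sq] using hvar i hi
    · rw [if_neg h]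
      have hij : (⟨i, hi⟩ : Finset.Icc 1 T) ≠ ⟨j, hj⟩ := by simp [h]
      have hind := hindep.indepFun hij
      have h0 := hind.integral_mul_eq_mul_integral (hmeas i).aestronglyMeasurable (hmeas j).aestronglyMeasurable
      simpa [Pi.mul_apply, hmean i hi, hmean j hj] using h0
  have expand : ∀ ω, (∑ t ∈ Finset.Icc 1 T, c t * e t ω) ^ 2
      = ∑ i ∈ Finset.Icc 1 T, ∑ j ∈ Finset.Icc 1 T, (c i * c j) * (e i ω * e j ω) := by
    intro ω
    rw [sq, Finset.sum_mul_sum]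
    exact Finset.sum_congr rfl fun i _ => Finset.sum_congr rfl fun j _ => by ring
  simp_rw [expand]
  rw [integral_finset_sum _ (fun i hi => integrable_finset_sum _
    (fun j hj => ((hintmul i hi j hj).const_mul _)))]
  have : ∀ i ∈ Finset.Icc 1 T,
      ∫ ω, ∑ j ∈ Finset.Icc 1 T, (c i * c j) * (e i ω * e j ω) ∂P = (c i) ^ 2 * σ2 := by
    intro i hi
    rw [integral_finset_sum _ (fun j hj => ((hintmul i hi j hj).const_mul _))]
    have h2 : ∀ j ∈ Finset.Icc 1 T,
        ∫ ω, (c i * c j) * (e i ω * e j ω) ∂P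
          = if i = j then (c i) ^ 2 * σ2 else 0 := by
      intro j hj
      rw [integral_const_mul, hcov i hi j hj]
      by_cases h : i = j
      · subst h; simp only [if_pos rfl, eq_self_iff_true, if_true]; ring
      · simp [h]
    rw [Finset.sum_congr rfl h2, Finset.sum_ite_eq, if_pos hi]
  rw [Finset.sum_congr rfl this, ← Finset.sum_mul, mul_comm]

/-- `g(s,t) = min(s,t)·(1 - max(s,t))`. -/
noncomputable def g (s t : ℝ) : ℝ := min s t * (1 - max s t)

/-- `m_T(s) = (⌊Ts⌋/T)(1 - ⌊Ts⌋/T)`. -/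
noncomputable def mT (T : ℕ) (s : ℝ) : ℝ :=
  ((⌊(T : ℝ) * s⌋ : ℝ) / T) * (1 - (⌊(T : ℝ) * s⌋ : ℝ) / T)

/-- `g_T(s,u) = g(⌊Ts⌋/T, ⌊Tu⌋/T)`. -/
noncomputable def gT (T : ℕ) (s u : ℝ) : ℝ :=
  g ((⌊(T : ℝ) * s⌋ : ℝ) / T) ((⌊(T : ℝ) * u⌋ : ℝ) / T)

/-- CUSUM process of the data `Y 1, …, Y T`:
`Z(s) = T^{-1/2} ∑_{k=1}^{⌊Ts⌋} (Y k - Ȳ_T)`. -/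
noncomputable def cusum (T : ℕ) (Y : ℕ → ℝ) (s : ℝ) : ℝ :=
  (Real.sqrt T)⁻¹ * ∑ k ∈ Finset.Icc 1 (⌊(T : ℝ) * s⌋.toNat),
    (Y k - (T : ℝ)⁻¹ * ∑ t ∈ Finset.Icc 1 T, Y t)

set_option maxHeartbeats 1600000 in
/-- For `Y t = μ + e t` with `e 1, …, e T` independent,
square-integrable, mean `0`, variance `σ²`, and `u ∈ (0,1)` with `1 ≤ ⌊Tu⌋ ≤ T-1`,
the CUSUM process `Ž(·,u)` of the change-centered data
`Y̌ t(u) = Y t - δ̂(u)·1(t > ⌊Tu⌋)` satisfies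
`E[Ž(s,u)²] = σ² (m_T(s) - g_T(s,u)²/m_T(u))` for every `s ∈ [0,1]`. -/
theorem stmt13 {Ω : Type*} [MeasurableSpace Ω] (P : Measure Ω) [IsProbabilityMeasure P]
    (T : ℕ) (hT : 2 ≤ T) (μ σ2 : ℝ) (e : ℕ → Ω → ℝ)
    (hmeas : ∀ k, Measurable (e k))
    (hindep : iIndepFun
      (fun k : (Finset.Icc 1 T) => e (k : ℕ)) P)
    (hL2 : ∀ k ∈ Finset.Icc 1 T, MemLp (e k) 2 P)
    (hmean : ∀ k ∈ Finset.Icc 1 T, ∫ ω, e k ω ∂P = 0)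
    (hvar : ∀ k ∈ Finset.Icc 1 T, ∫ ω, (e k ω) ^ 2 ∂P = σ2)
    (Y : ℕ → Ω → ℝ) (hY : ∀ t ω, Y t ω = μ + e t ω)
    (u : ℝ) (hu : u ∈ Set.Ioo (0 : ℝ) 1)
    (hu1 : 1 ≤ ⌊(T : ℝ) * u⌋) (hu2 : ⌊(T : ℝ) * u⌋ ≤ (T : ℤ) - 1)
    (δhat : Ω → ℝ)
    (hδ : ∀ ω, δhat ω = ((T : ℝ) - (⌊(T : ℝ) * u⌋ : ℝ))⁻¹ *
          ∑ t ∈ Finset.Icc (⌊(T : ℝ) * u⌋.toNat + 1) T, Y t ω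
        - ((⌊(T : ℝ) * u⌋ : ℝ))⁻¹ * ∑ t ∈ Finset.Icc 1 (⌊(T : ℝ) * u⌋.toNat), Y t ω) :
    ∀ s ∈ Set.Icc (0 : ℝ) 1,
      ∫ ω, (cusum T
          (fun t => Y t ω - δhat ω * (if ⌊(T : ℝ) * u⌋.toNat < t then 1 else 0)) s) ^ 2 ∂P
        = σ2 * (mT T s - (gT T s u) ^ 2 / mT T u) := by
  intro s hs
  obtain ⟨hs0, hs1⟩ := hs
  obtain ⟨hu0, hu1'⟩ := hu
  have hTpos : (0 : ℝ) < T := by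
    have : 0 < T := by omega
    exact_mod_cast this
  set n := ⌊(T : ℝ) * u⌋.toNat with hndef
  set m := ⌊(T : ℝ) * s⌋.toNat with hmdef
  have hnZ : ((n : ℕ) : ℤ) = ⌊(T : ℝ) * u⌋ := Int.toNat_of_nonneg (by omega)
  have hfu : (⌊(T : ℝ) * u⌋ : ℝ) = (n : ℝ) := by exact_mod_cast hnZ.symm
  have hfs0 : (0 : ℤ) ≤ ⌊(T : ℝ) * s⌋ := Int.floor_nonneg.mpr (by positivity)
  have hmZ : ((m : ℕ) : ℤ) = ⌊(T : ℝ) * s⌋ := Int.toNat_of_nonneg hfs0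
  have hfs : (⌊(T : ℝ) * s⌋ : ℝ) = (m : ℝ) := by exact_mod_cast hmZ.symm
  have hn1 : 1 ≤ n := by omega
  have hnT : n < T := by omega
  have hmTle : m ≤ T := by
    have h1 : ⌊(T : ℝ) * s⌋ ≤ (T : ℤ) := by
      have h2 := Int.floor_le_floor (R := ℝ)
        (show (T : ℝ) * s ≤ ((T : ℤ) : ℝ) by push_cast; nlinarith)
      simpa using h2
    omega
  have hnR : (0 : ℝ) < (n : ℝ) := by exact_mod_cast hn1
  have hTnR : (0 : ℝ) < (T : ℝ) - (n : ℝ) := by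
    have : (n : ℝ) < (T : ℝ) := by exact_mod_cast hnT
    linarith
  set A : ℝ := (if n < m then (m : ℝ) - (n : ℝ) else 0)
      - (m : ℝ) * ((T : ℝ) - (n : ℝ)) / (T : ℝ) with hA
  set c : ℕ → ℝ := fun t => (if t ≤ m then (1 : ℝ) else 0) - (m : ℝ) / (T : ℝ)
      - A * (if t ≤ n then -(1 / (n : ℝ)) else 1 / ((T : ℝ) - (n : ℝ))) with hc
  -- constant values of c on the relevant blocks
  have hc1 : ∀ t ∈ Finset.Icc 1 (min m n), c t = 1 - (m : ℝ) / T + A / n := by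
    intro t ht
    simp only [Finset.mem_Icc, le_min_iff] at ht
    simp only [hc]
    rw [if_pos (by omega), if_pos (by omega)]
    ring
  have hc2 : ∀ t ∈ Finset.Icc (m + 1) n, c t = -((m : ℝ) / T) + A / n := by
    intro t ht
    simp only [Finset.mem_Icc] at ht
    simp only [hc]
    rw [if_neg (by omega), if_pos (by omega)]
    ring
  have hc3 : ∀ t ∈ Finset.Icc (n + 1) m, c t = 1 - (m : ℝ) / T - A / ((T : ℝ) - n) := by
    intro t ht
    simp only [Finset.mem_Icc] at ht
    simp only [hc]
    rw [if_pos (by omega), if_neg (by omega)]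
    ring
  have hc4 : ∀ t ∈ Finset.Icc (max m n + 1) T, c t = -((m : ℝ) / T) - A / ((T : ℝ) - n) := by
    intro t ht
    simp only [Finset.mem_Icc, max_le_iff] at ht
    simp only [hc]
    rw [if_neg (by omega), if_neg (by omega)]
    ring
  -- pointwise identity
  have hZ : ∀ ω, cusum T
      (fun t => Y t ω - δhat ω * (if n < t then 1 else 0)) s
      = (Real.sqrt T)⁻¹ * ∑ t ∈ Finset.Icc 1 T, c t * e t ω := by
    intro ω
    rw [cusum, ← hmdef]
    congr 1
    set D := δhat ω with hD
    have hsumY : ∀ k : ℕ, ∑ t ∈ Finset.Icc 1 k, Y t ω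
        = (k : ℝ) * μ + ∑ t ∈ Finset.Icc 1 k, e t ω := by
      intro k
      rw [Finset.sum_congr rfl (fun t _ => hY t ω), Finset.sum_add_distrib,
        Finset.sum_const, Nat.card_Icc, nsmul_eq_mul]
      simp
    have hindsum : ∀ k : ℕ, n ≤ k →
        ∑ t ∈ Finset.Icc 1 k, (if n < t then (1 : ℝ) else 0) = (k : ℝ) - (n : ℝ) := by
      intro k hk
      rw [sum_Icc_split' _ hk, Finset.sum_congr rfl
        (fun t ht => if_neg (by simp only [Finset.mem_Icc] at ht; omega)),
        Finset.sum_const, smul_zero, zero_add,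
        Finset.sum_congr rfl (fun t ht => if_pos (by simp only [Finset.mem_Icc] at ht; omega)),
        sum_Icc_const' _ hk]
      ring
    have hDval : D = ((∑ t ∈ Finset.Icc 1 T, e t ω) - ∑ t ∈ Finset.Icc 1 n, e t ω)
          / ((T : ℝ) - (n : ℝ)) - (∑ t ∈ Finset.Icc 1 n, e t ω) / (n : ℝ) := by
      rw [hD, hδ ω, hfu]
      have h2 : ∑ t ∈ Finset.Icc (n + 1) T, Y t ω
          = ∑ t ∈ Finset.Icc 1 T, Y t ω - ∑ t ∈ Finset.Icc 1 n, Y t ω := by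
        rw [sum_Icc_split' (fun t => Y t ω) hnT.le]; ring
      rw [h2, hsumY, hsumY]
      field_simp
      ring
    have hTot : ∑ t ∈ Finset.Icc 1 T,
        (Y t ω - D * (if n < t then 1 else 0))
        = (T : ℝ) * μ + (∑ t ∈ Finset.Icc 1 T, e t ω) - D * ((T : ℝ) - (n : ℝ)) := by
      rw [Finset.sum_sub_distrib, hsumY, ← Finset.mul_sum, hindsum T hnT.le]
    have hindm : ∑ k ∈ Finset.Icc 1 m, (if n < k then (1 : ℝ) else 0)
        = (if n < m then (m : ℝ) - (n : ℝ) else 0) := by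
      rcases le_or_gt m n with h | h
      · rw [if_neg (not_lt.mpr h)]
        exact Finset.sum_eq_zero fun k hk =>
          if_neg (by simp only [Finset.mem_Icc] at hk; omega)
      · rw [if_pos h]; exact hindsum m h.le
    have hLHS : ∑ k ∈ Finset.Icc 1 m,
        ((Y k ω - D * (if n < k then 1 else 0))
          - (T : ℝ)⁻¹ * ∑ t ∈ Finset.Icc 1 T, (Y t ω - D * (if n < t then 1 else 0)))
        = ((m : ℝ) * μ + (∑ t ∈ Finset.Icc 1 m, e t ω)
            - D * (if n < m then (m : ℝ) - (n : ℝ) else 0))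
          - (m : ℝ) * ((T : ℝ)⁻¹ * ((T : ℝ) * μ
            + (∑ t ∈ Finset.Icc 1 T, e t ω) - D * ((T : ℝ) - (n : ℝ)))) := by
      rw [Finset.sum_sub_distrib, Finset.sum_sub_distrib, hsumY, ← Finset.mul_sum, hindm,
        hTot, Finset.sum_const, Nat.card_Icc, Nat.add_sub_cancel, nsmul_eq_mul]
    rw [hLHS]
    rcases le_or_gt m n with hmn | hmn
    · -- m ≤ n
      rw [sum_Icc_split' (fun t => c t * e t ω) hnT.le,
        sum_Icc_split' (fun t => c t * e t ω) hmn]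
      have p1 : ∀ t ∈ Finset.Icc 1 m, c t * e t ω = (1 - (m : ℝ) / T + A / n) * e t ω := by
        intro t ht
        rw [hc1 t (by rwa [min_eq_left hmn])]
      have p2 : ∀ t ∈ Finset.Icc (m + 1) n, c t * e t ω
          = (-((m : ℝ) / T) + A / n) * e t ω := fun t ht => by rw [hc2 t ht]
      have p3 : ∀ t ∈ Finset.Icc (n + 1) T, c t * e t ω
          = (-((m : ℝ) / T) - A / ((T : ℝ) - n)) * e t ω := by
        intro t ht
        rw [hc4 t (by rwa [max_eq_right hmn])]
      rw [Finset.sum_congr rfl p1, Finset.sum_congr rfl p2, Finset.sum_congr rfl p3,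
        ← Finset.mul_sum, ← Finset.mul_sum, ← Finset.mul_sum]
      have s2 : ∑ t ∈ Finset.Icc (m + 1) n, e t ω
          = (∑ t ∈ Finset.Icc 1 n, e t ω) - ∑ t ∈ Finset.Icc 1 m, e t ω := by
        rw [sum_Icc_split' (fun t => e t ω) hmn]; ring
      have s3 : ∑ t ∈ Finset.Icc (n + 1) T, e t ω
          = (∑ t ∈ Finset.Icc 1 T, e t ω) - ∑ t ∈ Finset.Icc 1 n, e t ω := by
        rw [sum_Icc_split' (fun t => e t ω) hnT.le]; ring
      rw [s2, s3, hDval, hA, if_neg (not_lt.mpr hmn)]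
      field_simp
      ring
    · -- n < m
      rw [sum_Icc_split' (fun t => c t * e t ω) hmTle,
        sum_Icc_split' (fun t => c t * e t ω) hmn.le]
      have p1 : ∀ t ∈ Finset.Icc 1 n, c t * e t ω = (1 - (m : ℝ) / T + A / n) * e t ω := by
        intro t ht
        rw [hc1 t (by rwa [min_eq_right hmn.le])]
      have p2 : ∀ t ∈ Finset.Icc (n + 1) m, c t * e t ω
          = (1 - (m : ℝ) / T - A / ((T : ℝ) - n)) * e t ω := fun t ht => by rw [hc3 t ht]
      have p3 : ∀ t ∈ Finset.Icc (m + 1) T, c t * e t ω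
          = (-((m : ℝ) / T) - A / ((T : ℝ) - n)) * e t ω := by
        intro t ht
        rw [hc4 t (by rwa [max_eq_left hmn.le])]
      rw [Finset.sum_congr rfl p1, Finset.sum_congr rfl p2, Finset.sum_congr rfl p3,
        ← Finset.mul_sum, ← Finset.mul_sum, ← Finset.mul_sum]
      have s2 : ∑ t ∈ Finset.Icc (n + 1) m, e t ω
          = (∑ t ∈ Finset.Icc 1 m, e t ω) - ∑ t ∈ Finset.Icc 1 n, e t ω := by
        rw [sum_Icc_split' (fun t => e t ω) hmn.le]; ring
      have s3 : ∑ t ∈ Finset.Icc (m + 1) T, e t ω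
          = (∑ t ∈ Finset.Icc 1 T, e t ω) - ∑ t ∈ Finset.Icc 1 m, e t ω := by
        rw [sum_Icc_split' (fun t => e t ω) hmTle]; ring
      rw [s2, s3, hDval, hA, if_pos hmn]
      field_simp
      ring
  -- now the integral computation
  simp_rw [hZ, mul_pow]
  rw [integral_const_mul, sq_int P T σ2 e hmeas hindep hL2 hmean hvar c]
  have hsqrt : ((Real.sqrt T)⁻¹) ^ 2 = (T : ℝ)⁻¹ := by
    rw [inv_pow, Real.sq_sqrt hTpos.le]
  rw [hsqrt]
  simp only [mT, gT, g, hfs, hfu]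
  have hmn' : (m : ℝ) ≤ (n : ℝ) ∨ (n : ℝ) ≤ (m : ℝ) := by
    rcases le_or_gt m n with h | h
    · exact Or.inl (by exact_mod_cast h)
    · exact Or.inr (by exact_mod_cast h.le)
  rcases le_or_gt m n with hmn | hmn
  · have hdiv : (m : ℝ) / T ≤ (n : ℝ) / T := by
      have : (m : ℝ) ≤ (n : ℝ) := by exact_mod_cast hmn
      gcongr
    rw [min_eq_left hdiv, max_eq_right hdiv]
    have hsum : ∑ t ∈ Finset.Icc 1 T, (c t) ^ 2
        = (m : ℝ) * (1 - (m : ℝ) / T + A / n) ^ 2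
          + ((n : ℝ) - m) * (-((m : ℝ) / T) + A / n) ^ 2
          + ((T : ℝ) - n) * (-((m : ℝ) / T) - A / ((T : ℝ) - n)) ^ 2 := by
      rw [sum_Icc_split' (fun t => (c t) ^ 2) hnT.le,
        sum_Icc_split' (fun t => (c t) ^ 2) hmn]
      have q1 : ∑ t ∈ Finset.Icc 1 m, (c t) ^ 2
          = ∑ _t ∈ Finset.Icc 1 m, (1 - (m : ℝ) / T + A / n) ^ 2 :=
        Finset.sum_congr rfl fun t ht => by rw [hc1 t (by rwa [min_eq_left hmn])]
      have q2 : ∑ t ∈ Finset.Icc (m + 1) n, (c t) ^ 2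
          = ∑ _t ∈ Finset.Icc (m + 1) n, (-((m : ℝ) / T) + A / n) ^ 2 :=
        Finset.sum_congr rfl fun t ht => by rw [hc2 t ht]
      have q3 : ∑ t ∈ Finset.Icc (n + 1) T, (c t) ^ 2
          = ∑ _t ∈ Finset.Icc (n + 1) T, (-((m : ℝ) / T) - A / ((T : ℝ) - n)) ^ 2 :=
        Finset.sum_congr rfl fun t ht => by rw [hc4 t (by rwa [max_eq_right hmn])]
      rw [q1, q2, q3, Finset.sum_const, Nat.card_Icc, Nat.add_sub_cancel, nsmul_eq_mul,
        sum_Icc_const' _ hmn, sum_Icc_const' _ hnT.le]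
    rw [hsum, hA, if_neg (not_lt.mpr hmn)]
    field_simp
    ring
  · have hdiv : (n : ℝ) / T ≤ (m : ℝ) / T := by
      have : (n : ℝ) ≤ (m : ℝ) := by exact_mod_cast hmn.le
      gcongr
    rw [min_eq_right hdiv, max_eq_left hdiv]
    have hsum : ∑ t ∈ Finset.Icc 1 T, (c t) ^ 2
        = (n : ℝ) * (1 - (m : ℝ) / T + A / n) ^ 2
          + ((m : ℝ) - n) * (1 - (m : ℝ) / T - A / ((T : ℝ) - n)) ^ 2
          + ((T : ℝ) - m) * (-((m : ℝ) / T) - A / ((T : ℝ) - n)) ^ 2 := by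
      rw [sum_Icc_split' (fun t => (c t) ^ 2) hmTle,
        sum_Icc_split' (fun t => (c t) ^ 2) hmn.le]
      have q1 : ∑ t ∈ Finset.Icc 1 n, (c t) ^ 2
          = ∑ _t ∈ Finset.Icc 1 n, (1 - (m : ℝ) / T + A / n) ^ 2 :=
        Finset.sum_congr rfl fun t ht => by rw [hc1 t (by rwa [min_eq_right hmn.le])]
      have q2 : ∑ t ∈ Finset.Icc (n + 1) m, (c t) ^ 2
          = ∑ _t ∈ Finset.Icc (n + 1) m, (1 - (m : ℝ) / T - A / ((T : ℝ) - n)) ^ 2 :=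
        Finset.sum_congr rfl fun t ht => by rw [hc3 t ht]
      have q3 : ∑ t ∈ Finset.Icc (m + 1) T, (c t) ^ 2
          = ∑ _t ∈ Finset.Icc (m + 1) T, (-((m : ℝ) / T) - A / ((T : ℝ) - n)) ^ 2 :=
        Finset.sum_congr rfl fun t ht => by rw [hc4 t (by rwa [max_eq_left hmn.le])]
      rw [q1, q2, q3, Finset.sum_const, Nat.card_Icc, Nat.add_sub_cancel, nsmul_eq_mul,
        sum_Icc_const' _ hmn.le, sum_Icc_const' _ hmTle]
    rw [hsum, hA, if_pos hmn]
    field_simp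
    ring
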